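/- arXiv:0711.4898 — 7 statements merged into one kernel-verified Lean document; each statement's English description precedes it below -/
import Mathlib

section
/- For every n ≥ 1, the coefficients c(n,k) of the power series expansion of 1/Φ_n(x) depend only on k modulo n; that is, c(n,k) = c(n, k + n) for all k ≥ 0. -/
open Polynomial

theorem cyclotomic_inv_coeff_periodic (n : ℕ) (hn : 1 ≤ n)
    (g : PowerSeries ℤ) (hg : (cyclotomic n ℤ : PowerSeries ℤ) * g = 1) (k : ℕ) :
    PowerSeries.coeff k g = PowerSeries.coeff (k + n) g := by
  obtain ⟨q, hq⟩ := cyclotomic.dvd_X_pow_sub_one n ℤ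
  have hqdeg : q.natDegree < k + n := by
    rcases eq_or_ne q 0 with h0 | h0
    · simpa [h0] using Nat.lt_of_lt_of_le hn (Nat.le_add_left n k)
    · have hΦ : (cyclotomic n ℤ) ≠ 0 := cyclotomic_ne_zero n ℤ
      have hdeg : (X ^ n - 1 : ℤ[X]).natDegree = n := by
        simpa using natDegree_X_pow_sub_C (n := n) (r := (1 : ℤ))
      have := natDegree_mul hΦ h0
      rw [← hq, hdeg, natDegree_cyclotomic] at this
      have htot : 1 ≤ n.totient := Nat.totient_pos.mpr hn
      omega
  have key : ((X ^ n - 1 : ℤ[X]) : PowerSeries ℤ) * g = (q : PowerSeries ℤ) := by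
    rw [hq, Polynomial.coe_mul, mul_right_comm, hg, one_mul]
  have h1 := congrArg (PowerSeries.coeff (k + n)) key
  rw [Polynomial.coeff_coe, Polynomial.coeff_eq_zero_of_natDegree_lt hqdeg] at h1
  have h2 : ((X ^ n - 1 : ℤ[X]) : PowerSeries ℤ) = PowerSeries.X ^ n - 1 := by
    push_cast
    ring
  rw [h2, sub_mul, one_mul, map_sub, PowerSeries.coeff_X_pow_mul] at h1
  linarith [h1]
end

section
/- For any prime p and integers l, m ≥ 1, the set S(p^l m) equals S(pm), where S(m) = { a(mn, k) : n ≥ 1, k ≥ 0 } and a(n,k) is the kth coefficient of Φ_n. -/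
open Polynomial

/-- `S(m)` is the set of all coefficients of cyclotomic polynomials of index divisible by `m`. -/
def S (m : ℕ) : Set ℤ :=
  {z | ∃ n ≥ 1, ∃ k : ℕ, (cyclotomic (m * n) ℤ).coeff k = z}

lemma S_step (p l m : ℕ) (hp : p.Prime) (hl : 1 ≤ l) (hm : 1 ≤ m) :
    S (p ^ (l + 1) * m) = S (p ^ l * m) := by
  ext z
  constructor
  · rintro ⟨n, hn, k, hk⟩
    refine ⟨p * n, Nat.one_le_iff_ne_zero.2 (Nat.mul_ne_zero hp.pos.ne' (by omega)), k, ?_⟩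
    rw [← hk]; ring_nf
  · rintro ⟨n, hn, k, hk⟩
    refine ⟨n, hn, p * k, ?_⟩
    have hdvd : p ∣ p ^ l * m * n := Dvd.dvd.mul_right
      (Dvd.dvd.mul_right (dvd_pow_self p (Nat.one_le_iff_ne_zero.1 hl)) m) n
    have h := cyclotomic_expand_eq_cyclotomic hp hdvd ℤ
    have h2 : p ^ (l + 1) * m * n = p ^ l * m * n * p := by ring
    rw [h2, ← h, Polynomial.coeff_expand hp.pos]
    simp [Nat.mul_div_cancel_left k hp.pos, hk]

theorem S_prime_pow_mul (p l m : ℕ) (hp : p.Prime) (hl : 1 ≤ l) (hm : 1 ≤ m) :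
    S (p ^ l * m) = S (p * m) := by
  induction l with
  | zero => omega
  | succ l ih =>
    rcases Nat.eq_or_lt_of_le hl with h | h
    · rw [← h]; simp
    · have hl' : 1 ≤ l := by omega
      rw [S_step p l m hp hl' hm, ih hl']
end

section
/- For every integer m ≥ 1, S(m) = S(κ(m)), where κ(m) = ∏_{p | m} p is the squarefree kernel (radical) of m and S(m) = { a(mn,k) : n ≥ 1, k ≥ 0 }. -/
open Polynomial

lemma cyclotomic_mul_expand (r : ℕ) :
    ∀ e : ℕ, 0 < e → (∀ p : ℕ, p.Prime → p ∣ e → p ∣ r) →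
      cyclotomic (r * e) ℤ = expand ℤ e (cyclotomic r ℤ) := by
  intro e
  induction e using Nat.strong_induction_on with
  | _ e ih =>
    intro he hprimes
    rcases eq_or_ne e 1 with rfl | hne
    · simp
    · obtain ⟨p, hp, hpe⟩ := Nat.exists_prime_and_dvd hne
      obtain ⟨e', rfl⟩ := hpe
      have he' : 0 < e' := Nat.pos_of_mul_pos_left (by rwa [mul_comm] at he)
      have hlt : e' < p * e' := by
        nlinarith [hp.one_lt]
      have hrec : cyclotomic (r * e') ℤ = expand ℤ e' (cyclotomic r ℤ) :=
        ih e' hlt he' (fun q hq hqe => hprimes q hq (hqe.mul_left p))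
      have hpr : p ∣ r * e' :=
        (hprimes p hp (Dvd.intro e' rfl)).mul_right e'
      have h2 := cyclotomic_expand_eq_cyclotomic hp hpr ℤ
      rw [show r * (p * e') = (r * e') * p by ring, ← h2, hrec, expand_expand]

lemma cyclotomic_eq_expand_radical (N : ℕ) (hN : 0 < N) :
    ∃ e : ℕ, 0 < e ∧ N = (∏ p ∈ N.primeFactors, p) * e ∧
      cyclotomic N ℤ = expand ℤ e (cyclotomic (∏ p ∈ N.primeFactors, p) ℤ) := by
  set r := ∏ p ∈ N.primeFactors, p with hr
  have hrd : r ∣ N := Nat.prod_primeFactors_dvd N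
  obtain ⟨e, he⟩ := hrd
  have he0 : 0 < e := by
    rcases Nat.eq_zero_or_pos e with h | h
    · subst h; simp at he; omega
    · exact h
  have hprimes : ∀ p : ℕ, p.Prime → p ∣ e → p ∣ r := by
    intro p hp hpe
    apply Finset.dvd_prod_of_mem
    rw [Nat.mem_primeFactors]
    exact ⟨hp, he ▸ hpe.mul_left r, hN.ne'⟩
  exact ⟨e, he0, he, he ▸ cyclotomic_mul_expand r e he0 hprimes⟩

lemma zero_mem_S (m : ℕ) : (0 : ℤ) ∈ S m :=
  ⟨1, le_refl 1, (cyclotomic (m * 1) ℤ).natDegree + 1,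
    coeff_eq_zero_of_natDegree_lt (Nat.lt_succ_self _)⟩

theorem S_eq_S_radical (m : ℕ) (hm : 1 ≤ m) :
    S m = S (∏ p ∈ m.primeFactors, p) := by
  set r := ∏ p ∈ m.primeFactors, p with hrdef
  have hrd : r ∣ m := Nat.prod_primeFactors_dvd m
  have hr0 : 0 < r := Nat.pos_of_dvd_of_pos hrd hm
  ext z
  constructor
  · rintro ⟨n, hn, k, hk⟩
    obtain ⟨t, ht⟩ := hrd
    have ht0 : 0 < t := by
      rcases Nat.eq_zero_or_pos t with h | h
      · subst h; simp at ht; omega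
      · exact h
    exact ⟨t * n, Nat.one_le_iff_ne_zero.mpr (by positivity), k, by rw [← mul_assoc, ← ht]; exact hk⟩
  · rintro ⟨n, hn, k, hk⟩
    have hm0 : m ≠ 0 := by omega
    have hn0 : n ≠ 0 := by omega
    have hrn0 : 0 < r * n := by positivity
    have hmn0 : 0 < m * n := by positivity
    have hpf : (r * n).primeFactors = (m * n).primeFactors := by
      rw [Nat.primeFactors_mul hr0.ne' hn0, Nat.primeFactors_mul hm0 hn0, hrdef,
        Nat.primeFactors_prod (fun p hp => Nat.prime_of_mem_primeFactors hp)]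
    obtain ⟨e₁, he₁0, -, hexp₁⟩ := cyclotomic_eq_expand_radical (r * n) hrn0
    obtain ⟨e₂, he₂0, -, hexp₂⟩ := cyclotomic_eq_expand_radical (m * n) hmn0
    rw [hpf] at hexp₁
    rw [hexp₁, coeff_expand he₁0] at hk
    split_ifs at hk with h
    · refine ⟨n, hn, e₂ * (k / e₁), ?_⟩
      rw [hexp₂, coeff_expand_mul' he₂0, hk]
    · exact hk ▸ zero_mem_S m
end

section
/- For any prime p and integers l, m ≥ 1, R(p^l m) = R(pm), where R(m) = { c(mn,k) : n ≥ 1, k ≥ 0 } and c(n,k) is the kth coefficient of the power series 1/Φ_n(x). -/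
open Polynomial


noncomputable def E (q : ℕ) (f : PowerSeries ℤ) : PowerSeries ℤ :=
  PowerSeries.mk fun i => if q ∣ i then PowerSeries.coeff (i / q) f else 0

lemma coeff_E (q : ℕ) (f : PowerSeries ℤ) (i : ℕ) :
    PowerSeries.coeff i (E q f) = if q ∣ i then PowerSeries.coeff (i / q) f else 0 := by
  simp [E]

lemma sum_antidiag_expand (q j : ℕ) (hq : 0 < q) (F : ℕ × ℕ → ℤ) :
    ∑ p ∈ Finset.HasAntidiagonal.antidiagonal (q * j), (if q ∣ p.1 then F p else 0)
      = ∑ p ∈ Finset.HasAntidiagonal.antidiagonal j, F (q * p.1, q * p.2) := by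
  rw [← Finset.sum_filter]
  refine Finset.sum_nbij' (fun p => (p.1 / q, p.2 / q)) (fun p => (q * p.1, q * p.2)) ?_ ?_ ?_ ?_ ?_
  · rintro ⟨a, b⟩ hp
    simp only [Finset.mem_filter, Finset.HasAntidiagonal.mem_antidiagonal] at hp ⊢
    obtain ⟨hab, c, hc⟩ := hp
    have hb : q ∣ b := (Nat.dvd_add_right ⟨c, hc⟩).mp (hab ▸ Dvd.intro j rfl)
    obtain ⟨d, hd⟩ := hb
    subst hc hd
    simp only [Nat.mul_div_cancel_left _ hq]
    have : q * c + q * d = q * j := hab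
    exact Nat.eq_of_mul_eq_mul_left hq (by linarith [this, Nat.mul_add q c d])
  · rintro ⟨a, b⟩ hp
    simp only [Finset.mem_filter, Finset.HasAntidiagonal.mem_antidiagonal] at hp ⊢
    exact ⟨by rw [← Nat.mul_add, hp], Dvd.intro a rfl⟩
  · rintro ⟨a, b⟩ hp
    simp only [Finset.mem_filter, Finset.HasAntidiagonal.mem_antidiagonal] at hp
    obtain ⟨hab, c, hc⟩ := hp
    have hb : q ∣ b := (Nat.dvd_add_right ⟨c, hc⟩).mp (hab ▸ Dvd.intro j rfl)
    obtain ⟨d, hd⟩ := hb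
    subst hc hd
    simp [Nat.mul_div_cancel_left _ hq]
  · rintro ⟨a, b⟩ _
    simp [Nat.mul_div_cancel_left _ hq]
  · rintro ⟨a, b⟩ hp
    simp only [Finset.mem_filter, Finset.HasAntidiagonal.mem_antidiagonal] at hp
    obtain ⟨hab, c, hc⟩ := hp
    have hb : q ∣ b := (Nat.dvd_add_right ⟨c, hc⟩).mp (hab ▸ Dvd.intro j rfl)
    obtain ⟨d, hd⟩ := hb
    subst hc hd
    simp [Nat.mul_div_cancel_left _ hq]

lemma E_mul (q : ℕ) (hq : 0 < q) (A B : PowerSeries ℤ) :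
    E q (A * B) = E q A * E q B := by
  ext i
  rw [PowerSeries.coeff_mul, coeff_E]
  by_cases hi : q ∣ i
  · obtain ⟨j, rfl⟩ := hi
    rw [if_pos (Dvd.intro j rfl), Nat.mul_div_cancel_left _ hq, PowerSeries.coeff_mul]
    have : ∀ p ∈ Finset.HasAntidiagonal.antidiagonal (q * j),
        PowerSeries.coeff p.1 (E q A) * PowerSeries.coeff p.2 (E q B)
          = if q ∣ p.1 then PowerSeries.coeff (p.1 / q) A *
              PowerSeries.coeff (p.2 / q) B else 0 := by
      rintro ⟨a, b⟩ hp
      simp only [Finset.HasAntidiagonal.mem_antidiagonal] at hp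
      rw [coeff_E, coeff_E]
      by_cases ha : q ∣ a
      · have hb : q ∣ b := (Nat.dvd_add_right ha).mp (hp ▸ Dvd.intro j rfl)
        rw [if_pos ha, if_pos hb, if_pos ha]
      · rw [if_neg ha, if_neg ha, zero_mul]
    rw [Finset.sum_congr rfl this,
      sum_antidiag_expand q j hq (fun p => PowerSeries.coeff (p.1 / q) A *
        PowerSeries.coeff (p.2 / q) B)]
    exact Finset.sum_congr rfl (by
      rintro ⟨a, b⟩ _
      simp [Nat.mul_div_cancel_left _ hq])
  · rw [if_neg hi]
    refine (Finset.sum_eq_zero ?_).symm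
    rintro ⟨a, b⟩ hp
    simp only [Finset.HasAntidiagonal.mem_antidiagonal] at hp
    rw [coeff_E, coeff_E]
    by_cases ha : q ∣ a
    · by_cases hb : q ∣ b
      · exact absurd (hp ▸ Dvd.dvd.add ha hb) hi
      · rw [if_neg hb, mul_zero]
    · rw [if_neg ha, zero_mul]

lemma E_one (q : ℕ) (hq : 0 < q) : E q 1 = 1 := by
  ext i
  rw [coeff_E]
  by_cases h0 : i = 0
  · subst h0; simp
  · simp only [PowerSeries.coeff_one]
    rw [if_neg h0]
    split_ifs with hd he
    · exfalso
      obtain ⟨c, rfl⟩ := hd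
      rw [Nat.mul_div_cancel_left _ hq] at he
      exact h0 (by simp [he])
    · rfl
    · rfl

lemma E_coe (q : ℕ) (hq : 0 < q) (P : Polynomial ℤ) :
    ((Polynomial.expand ℤ q P : Polynomial ℤ) : PowerSeries ℤ) = E q (P : PowerSeries ℤ) := by
  ext i
  rw [Polynomial.coeff_coe, coeff_E, Polynomial.coeff_expand hq]
  split <;> simp [Polynomial.coeff_coe]

lemma cyclotomic_pow_expand (p : ℕ) (hp : p.Prime) (l s : ℕ) (hl : 1 ≤ l) (hs : 0 < s) :
    cyclotomic (p ^ l * s) ℤ = Polynomial.expand ℤ (p ^ (l - 1)) (cyclotomic (p * s) ℤ) := by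
  induction l with
  | zero => omega
  | succ l ih =>
    rcases Nat.eq_zero_or_pos l with rfl | hl'
    · simp
    · have h1 : p ^ (l + 1) * s = p ^ l * s * p := by ring
      rw [h1, ← cyclotomic_expand_eq_cyclotomic hp (Dvd.dvd.mul_right
          (dvd_pow_self p (by omega)) s) ℤ, ih hl']
      rw [Polynomial.expand_expand]
      congr 1
      conv_rhs => rw [show l + 1 - 1 = 1 + (l - 1) by omega, pow_add, pow_one]

/-- `R(m)` is the set of all coefficients of the power series `1/Φ_{mn}(x)` over `n ≥ 1`. -/
def R (m : ℕ) : Set ℤ :=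
  {z | ∃ n ≥ 1, ∃ k : ℕ, ∃ g : PowerSeries ℤ,
    (cyclotomic (m * n) ℤ : PowerSeries ℤ) * g = 1 ∧ PowerSeries.coeff k g = z}

theorem R_prime_pow_mul (p l m : ℕ) (hp : p.Prime) (hl : 1 ≤ l) (hm : 1 ≤ m) :
    R (p ^ l * m) = R (p * m) := by
  have hp0 : 0 < p := hp.pos
  ext z
  constructor
  · rintro ⟨n, hn, k, g, hg, hc⟩
    refine ⟨p ^ (l - 1) * n, Nat.mul_pos (pow_pos hp0 _) hn, k, g, ?_, hc⟩
    rw [← hg]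
    congr 2
    have : p ^ l = p * p ^ (l - 1) := by
      conv_lhs => rw [show l = 1 + (l - 1) by omega]
      rw [pow_add, pow_one]
    rw [this]; ring
  · rintro ⟨n, hn, k, g, hg, hc⟩
    set q := p ^ (l - 1) with hq
    have hq0 : 0 < q := by positivity
    refine ⟨n, hn, q * k, E q g, ?_, ?_⟩
    · have hcyc : cyclotomic (p ^ l * m * n) ℤ =
          Polynomial.expand ℤ q (cyclotomic (p * m * n) ℤ) := by
        have h1 : p ^ l * m * n = p ^ l * (m * n) := by ring
        have h2 : p * m * n = p * (m * n) := by ring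
        rw [h1, h2]
        exact cyclotomic_pow_expand p hp l (m * n) hl (Nat.mul_pos hm hn)
      rw [hcyc, E_coe q hq0, ← E_mul q hq0, hg, E_one q hq0]
    · rw [coeff_E, if_pos (Dvd.intro k rfl), Nat.mul_div_cancel_left _ hq0]
      exact hc
end

section
/- Let m > 1 be squarefree, and let p_1 < p_2 < ⋯ < p_t be primes all congruent to 1 mod m with m < p_1 and p_t < 2p_1, and let m_1 be the product p_1⋯p_t, multiplied additionally by a prime q > 2p_1 if t is even (so that μ(m_1) = -1). Then for every k with p_t ≤ k < 2p_1, the coefficient a(m_1 m, k) of Φ_{m_1 m} equals c(m,k) - μ(m)·t·c(m, k-1), where c(m,j) are the power series coefficients of 1/Φ_m(x). -/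
open Polynomial ArithmeticFunction
open scoped ArithmeticFunction.Moebius

noncomputable section CycAux

private lemma aux_isUnit_cyclo (n : ℕ) : IsUnit ((cyclotomic n ℤ : Polynomial ℤ) : PowerSeries ℤ) := by
  rw [PowerSeries.isUnit_iff_constantCoeff, Polynomial.constantCoeff_coe]
  rcases eq_or_lt_of_le (Nat.zero_le n) with h | h
  · simp [← h]
  rcases eq_or_lt_of_le (show 1 ≤ n from h) with h1 | h1
  · simp [← h1, cyclotomic_one, Int.isUnit_iff]
  · rw [cyclotomic_coeff_zero ℤ h1]; exact isUnit_one

private lemma aux_isUnit_one_sub (d : ℕ) : IsUnit ((1 : PowerSeries ℤ) - (PowerSeries.X) ^ (d+1)) := by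
  rw [PowerSeries.isUnit_iff_constantCoeff, map_sub, map_one, map_pow, PowerSeries.constantCoeff_X]
  simp

/-- unit of the cyclotomic polynomial as power series -/
private def cu (n : ℕ) : (PowerSeries ℤ)ˣ := (aux_isUnit_cyclo n).unit

/-- unit of `1 - X^d` for `d > 0` -/
private def vu (d : ℕ) : (PowerSeries ℤ)ˣ :=
  if h : 0 < d then (aux_isUnit_one_sub (d-1)).unit else 1

@[simp] private lemma cu_val (n : ℕ) : (cu n : PowerSeries ℤ) = (cyclotomic n ℤ : Polynomial ℤ) :=
  IsUnit.unit_spec _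

private lemma vu_val {d : ℕ} (h : 0 < d) :
    (vu d : PowerSeries ℤ) = 1 - (PowerSeries.X) ^ d := by
  rw [vu, dif_pos h]
  have : d - 1 + 1 = d := by omega
  rw [IsUnit.unit_spec, this]

end CycAux

noncomputable section CycAux2

private lemma prod_zpow_eq {α : Type*} {G : Type*} [CommGroup G] (a : G) (s : Finset α)
    (f : α → ℤ) : ∏ i ∈ s, a ^ f i = a ^ (∑ i ∈ s, f i) := by
  classical
  induction s using Finset.induction with
  | empty => simp
  | insert _ _ h ih => rw [Finset.prod_insert h, Finset.sum_insert h, ih, zpow_add]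

private lemma cu_divisors_prod (k : ℕ) (hk : 0 < k) :
    ∏ i ∈ k.divisors, cu i = -(vu k) := by
  apply Units.ext
  rw [show ((∏ i ∈ k.divisors, cu i : (PowerSeries ℤ)ˣ) : PowerSeries ℤ)
      = ∏ i ∈ k.divisors, (cu i : PowerSeries ℤ) from
    map_prod (Units.coeHom (PowerSeries ℤ)) _ _]
  simp only [cu_val]
  simp only [← Polynomial.coeToPowerSeries.ringHom_apply]
  rw [← map_prod (Polynomial.coeToPowerSeries.ringHom (R := ℤ)),
    prod_cyclotomic_eq_X_pow_sub_one hk ℤ]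
  simp only [Polynomial.coeToPowerSeries.ringHom_apply]
  rw [Units.val_neg, vu_val hk]
  push_cast
  ring

private lemma cu_eq_prod {n : ℕ} (hn : 1 < n) :
    cu n = ∏ b ∈ n.divisors, (vu b) ^ ((μ (n / b) : ℤ)) := by
  have key := (prod_eq_iff_prod_pow_moebius_eq (R := (PowerSeries ℤ)ˣ)
    (f := cu) (g := fun k => -(vu k))).mp ?_ n (by omega)
  · rw [← key]
    have : ∀ x ∈ n.divisorsAntidiagonal, (-(vu x.2)) ^ ((μ x.1 : ℤ)) =
        (-1 : (PowerSeries ℤ)ˣ) ^ ((μ x.1 : ℤ)) * (vu x.2) ^ ((μ x.1 : ℤ)) := by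
      intro x _
      rw [← mul_zpow, neg_one_mul]
    rw [Finset.prod_congr rfl this, Finset.prod_mul_distrib, prod_zpow_eq]
    have hsum : (∑ x ∈ n.divisorsAntidiagonal, (μ x.1 : ℤ)) = 0 := by
      have h1 : (∑ x ∈ n.divisorsAntidiagonal, (μ x.1 : ℤ)) =
          ∑ i ∈ n.divisors, μ i := Nat.sum_divisorsAntidiagonal (fun a b => (μ a : ℤ))
      rw [h1, ← coe_mul_zeta_apply, moebius_mul_coe_zeta]
      simp [Nat.ne_of_gt (by omega : 1 < n)]
    rw [hsum, zpow_zero, one_mul]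
    rw [Nat.prod_divisorsAntidiagonal' (f := fun a b => (vu b) ^ ((μ a : ℤ)))]
  · exact fun k hk => cu_divisors_prod k hk

end CycAux2

noncomputable section CycAux3

/-- units congruent to 1 mod X^N -/
private def sgp (N : ℕ) : Subgroup (PowerSeries ℤ)ˣ where
  carrier := {v | (PowerSeries.X : PowerSeries ℤ) ^ N ∣ (v : PowerSeries ℤ) - 1}
  one_mem' := by simp
  mul_mem' := by
    intro a b ha hb
    have : ((a * b : (PowerSeries ℤ)ˣ) : PowerSeries ℤ) - 1
        = (a : PowerSeries ℤ) * ((b : PowerSeries ℤ) - 1) + ((a : PowerSeries ℤ) - 1) := by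
      push_cast; ring
    rw [Set.mem_setOf_eq, this]
    exact dvd_add (Dvd.dvd.mul_left hb _) ha
  inv_mem' := by
    intro a ha
    show (PowerSeries.X : PowerSeries ℤ) ^ _ ∣ ((a⁻¹ : (PowerSeries ℤ)ˣ) : PowerSeries ℤ) - 1
    have ha' : (PowerSeries.X : PowerSeries ℤ) ^ _ ∣ (a : PowerSeries ℤ) - 1 := ha
    have h2 : (a : PowerSeries ℤ) * ((a⁻¹ : (PowerSeries ℤ)ˣ) : PowerSeries ℤ) = 1 := a.mul_inv
    have : ((a⁻¹ : (PowerSeries ℤ)ˣ) : PowerSeries ℤ) - 1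
        = ((a⁻¹ : (PowerSeries ℤ)ˣ) : PowerSeries ℤ) * (1 - (a : PowerSeries ℤ)) := by
      linear_combination h2
    rw [this]
    exact Dvd.dvd.mul_left (dvd_sub_comm.mp ha') _

private lemma mem_sgp_iff {N : ℕ} {v : (PowerSeries ℤ)ˣ} :
    v ∈ sgp N ↔ (PowerSeries.X : PowerSeries ℤ) ^ N ∣ (v : PowerSeries ℤ) - 1 := Iff.rfl

private lemma vu_mem_sgp {N d : ℕ} (hd : 0 < d) (hNd : N ≤ d) : vu d ∈ sgp N := by
  rw [mem_sgp_iff, vu_val hd]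
  have : (1 : PowerSeries ℤ) - PowerSeries.X ^ d - 1 = -(PowerSeries.X ^ d) := by ring
  rw [this]
  exact Dvd.dvd.neg_right (pow_dvd_pow _ hNd)

/-- the inverse of 1 - X^d is congruent to 1 + X^d mod X^(2d) -/
private lemma vu_inv_congr {d : ℕ} (hd : 0 < d) :
    (PowerSeries.X : PowerSeries ℤ) ^ (2 * d) ∣
      (((vu d)⁻¹ : (PowerSeries ℤ)ˣ) : PowerSeries ℤ) - (1 + PowerSeries.X ^ d) := by
  set w := (((vu d)⁻¹ : (PowerSeries ℤ)ˣ) : PowerSeries ℤ) with hw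
  have h2 : ((1 : PowerSeries ℤ) - PowerSeries.X ^ d) * w = 1 := by
    rw [hw, ← vu_val hd]; exact (vu d).mul_inv
  have h1 : w - 1 - PowerSeries.X ^ d * w = 0 := by linear_combination h2
  have key : w - (1 + PowerSeries.X ^ d) = PowerSeries.X ^ (2 * d) * w := by
    rw [two_mul, pow_add]
    linear_combination (1 + (PowerSeries.X : PowerSeries ℤ) ^ d) * h1
  rw [key]
  exact Dvd.dvd.mul_right (dvd_refl _) _

end CycAux3

noncomputable section CycAux4

private lemma vu_zpow_congr {N d : ℕ} (hd : 0 < d) (hNd : N ≤ 2 * d) {c : ℤ}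
    (hc : c = 1 ∨ c = -1) :
    (PowerSeries.X : PowerSeries ℤ) ^ N ∣
      ((vu d ^ c : (PowerSeries ℤ)ˣ) : PowerSeries ℤ)
        - (1 - (c : PowerSeries ℤ) * PowerSeries.X ^ d) := by
  rcases hc with rfl | rfl
  · rw [zpow_one, vu_val hd]
    simp
  · rw [zpow_neg_one]
    have h := (vu_inv_congr hd).trans (dvd_refl _)
    have h2 : ((1 : PowerSeries ℤ) - ((-1 : ℤ) : PowerSeries ℤ) * PowerSeries.X ^ d)
        = 1 + PowerSeries.X ^ d := by push_cast; ring
    rw [h2]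
    exact (pow_dvd_pow _ hNd).trans (vu_inv_congr hd)

private lemma prod_vu_congr {ι : Type*} [DecidableEq ι] (N : ℕ) (c : ℤ)
    (hc : c = 1 ∨ c = -1) (e : ι → ℕ) (he : ∀ i, 0 < e i) (hN : ∀ i j, N ≤ e i + e j)
    (s : Finset ι) :
    (PowerSeries.X : PowerSeries ℤ) ^ N ∣
      ((∏ i ∈ s, vu (e i) ^ c : (PowerSeries ℤ)ˣ) : PowerSeries ℤ)
        - (1 - (c : PowerSeries ℤ) * ∑ i ∈ s, (PowerSeries.X : PowerSeries ℤ) ^ (e i)) := by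
  induction s using Finset.induction with
  | empty => simp
  | @insert j s hj ih =>
    rw [Finset.prod_insert hj, Finset.sum_insert hj]
    set A := ((vu (e j) ^ c : (PowerSeries ℤ)ˣ) : PowerSeries ℤ) with hA
    set B := ((∏ i ∈ s, vu (e i) ^ c : (PowerSeries ℤ)ˣ) : PowerSeries ℤ) with hB
    have hAB : ((vu (e j) ^ c * ∏ i ∈ s, vu (e i) ^ c : (PowerSeries ℤ)ˣ) : PowerSeries ℤ)
        = A * B := rfl
    rw [hAB]
    set xj := (PowerSeries.X : PowerSeries ℤ) ^ (e j) with hxj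
    set S := ∑ i ∈ s, (PowerSeries.X : PowerSeries ℤ) ^ (e i) with hS
    have hfac : (PowerSeries.X : PowerSeries ℤ) ^ N ∣ A - (1 - (c : PowerSeries ℤ) * xj) :=
      vu_zpow_congr (he j) (by have := hN j j; omega) hc
    have hxjS : (PowerSeries.X : PowerSeries ℤ) ^ N ∣ xj * S := by
      rw [hS, Finset.mul_sum]
      refine Finset.dvd_sum fun i _ => ?_
      rw [hxj, ← pow_add]
      exact pow_dvd_pow _ (hN j i)
    have hring : A * B - (1 - (c : PowerSeries ℤ) * (xj + S))
        = A * (B - (1 - (c : PowerSeries ℤ) * S))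
          + (1 - (c : PowerSeries ℤ) * S) * (A - (1 - (c : PowerSeries ℤ) * xj))
          + (c : PowerSeries ℤ) * (c : PowerSeries ℤ) * (xj * S) := by ring
    rw [hring]
    exact dvd_add (dvd_add (ih.mul_left _) (hfac.mul_left _)) (hxjS.mul_left _)

private lemma g_periodic {m : ℕ} (hm : 1 < m) {g : PowerSeries ℤ}
    (hg : ((cyclotomic m ℤ : Polynomial ℤ) : PowerSeries ℤ) * g = 1) (j : ℕ) :
    PowerSeries.coeff (j + m) g = PowerSeries.coeff j g := by
  obtain ⟨Ψ, hΨ⟩ := cyclotomic.dvd_X_pow_sub_one m ℤ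
  have hXm : ((Polynomial.X : Polynomial ℤ) ^ m - 1) ≠ 0 := by
    have := Polynomial.X_pow_sub_C_ne_zero (R := ℤ) (by omega : 0 < m) 1
    simpa using this
  have hΨ0 : Ψ ≠ 0 := by
    rintro rfl
    rw [mul_zero] at hΨ
    exact hXm hΨ
  have hdeg : Ψ.natDegree < m := by
    have h1 : ((Polynomial.X : Polynomial ℤ) ^ m - 1).natDegree = m := by
      have := Polynomial.natDegree_X_pow_sub_C (R := ℤ) (n := m) (r := 1)
      simpa using this
    have h2 := Polynomial.natDegree_mul (cyclotomic_ne_zero m ℤ) hΨ0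
    rw [← hΨ, h1, natDegree_cyclotomic] at h2
    have := Nat.totient_pos.mpr (by omega : 0 < m)
    omega
  have hps : ((PowerSeries.X : PowerSeries ℤ) ^ m - 1) * g = (Ψ : PowerSeries ℤ) := by
    have hcoe : (((Polynomial.X : Polynomial ℤ) ^ m - 1 : Polynomial ℤ) : PowerSeries ℤ)
        = (PowerSeries.X : PowerSeries ℤ) ^ m - 1 := by
      push_cast
      rfl
    calc ((PowerSeries.X : PowerSeries ℤ) ^ m - 1) * g
        = (((Polynomial.X : Polynomial ℤ) ^ m - 1 : Polynomial ℤ) : PowerSeries ℤ) * g := by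
          rw [hcoe]
      _ = ((cyclotomic m ℤ : Polynomial ℤ) : PowerSeries ℤ) * g * (Ψ : PowerSeries ℤ) := by
          rw [hΨ]; push_cast; ring
      _ = (Ψ : PowerSeries ℤ) := by rw [hg, one_mul]
  have hc := congrArg (PowerSeries.coeff (j + m)) hps
  rw [sub_mul, one_mul, map_sub, PowerSeries.coeff_X_pow_mul, Polynomial.coeff_coe,
    Polynomial.coeff_eq_zero_of_natDegree_lt (by omega : Ψ.natDegree < j + m)] at hc
  linarith [hc]

end CycAux4

noncomputable section CycAux5

private lemma squarefree_prod_primes {ι : Type*} [DecidableEq ι] (f : ι → ℕ) (s : Finset ι)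
    (hf : ∀ i ∈ s, (f i).Prime) (hinj : ∀ i ∈ s, ∀ j ∈ s, f i = f j → i = j) :
    Squarefree (∏ i ∈ s, f i) := by
  induction s using Finset.induction with
  | empty => simpa using squarefree_one
  | @insert j s hj ih =>
    rw [Finset.prod_insert hj]
    have hcop : Nat.Coprime (f j) (∏ i ∈ s, f i) := by
      apply Nat.Coprime.prod_right
      intro i hi
      refine (Nat.coprime_primes (hf j (Finset.mem_insert_self j s))
        (hf i (Finset.mem_insert_of_mem hi))).mpr ?_
      intro h
      exact hj (hinj j (Finset.mem_insert_self j s) i (Finset.mem_insert_of_mem hi) h ▸ hi)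
    rw [Nat.squarefree_mul hcop]
    exact ⟨(hf j (Finset.mem_insert_self j s)).squarefree,
      ih (fun i hi => hf i (Finset.mem_insert_of_mem hi))
        (fun i hi j' hj' => hinj i (Finset.mem_insert_of_mem hi) j' (Finset.mem_insert_of_mem hj'))⟩

end CycAux5

theorem coeff_cyclotomic_m1m (m t : ℕ) (hm : 1 < m) (hsf : Squarefree m)
    (ht : 0 < t) (p : Fin t → ℕ) (hmono : StrictMono p)
    (hprime : ∀ i, (p i).Prime) (hcong : ∀ i, p i ≡ 1 [MOD m])
    (hlow : m < p ⟨0, ht⟩) (hhigh : p ⟨t - 1, by omega⟩ < 2 * p ⟨0, ht⟩)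
    (q : ℕ) (hq : q.Prime) (hq2 : 2 * p ⟨0, ht⟩ < q)
    (m₁ : ℕ) (hm₁ : m₁ = if Even t then (∏ i, p i) * q else ∏ i, p i)
    (g : PowerSeries ℤ) (hg : (cyclotomic m ℤ : PowerSeries ℤ) * g = 1)
    (k : ℕ) (hk₁ : p ⟨t - 1, by omega⟩ ≤ k) (hk₂ : k < 2 * p ⟨0, ht⟩) :
    (cyclotomic (m₁ * m) ℤ).coeff k =
      PowerSeries.coeff k g - μ m * t * PowerSeries.coeff (k - 1) g := by
  classical
  have hpinj : Function.Injective p := hmono.injective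
  have hpge : ∀ i, p ⟨0, ht⟩ ≤ p i := fun i => hmono.monotone (by simp [Fin.le_def])
  have hple : ∀ i, p i ≤ p ⟨t - 1, by omega⟩ := fun i =>
    hmono.monotone (by simp [Fin.le_def]; omega)
  have hP03 : 3 ≤ p ⟨0, ht⟩ := by
    have h2 := (hprime ⟨0, ht⟩).two_le
    omega
  have hppos : ∀ i, 0 < p i := fun i => (hprime i).pos
  have hpiN : ∀ i, p i < 2 * p ⟨0, ht⟩ := fun i => lt_of_le_of_lt (hple i) hhigh
  have hpcop : ∀ i, Nat.Coprime (p i) m := by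
    intro i
    rw [Nat.Prime.coprime_iff_not_dvd (hprime i)]
    intro hdvd
    have := Nat.le_of_dvd (by omega) hdvd
    have := hpge i
    omega
  have hqcop : Nat.Coprime q m := by
    rw [Nat.Prime.coprime_iff_not_dvd hq]
    intro hdvd
    have := Nat.le_of_dvd (by omega) hdvd
    omega
  -- pairwise coprime of the p i
  have hpair : (↑(Finset.univ : Finset (Fin t)) : Set (Fin t)).Pairwise
      (Function.onFun Nat.Coprime p) := by
    intro i _ j _ hij
    exact (Nat.coprime_primes (hprime i) (hprime j)).mpr fun h => hij (hpinj h)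
  have hPsf : Squarefree (∏ i, p i) := by
    apply squarefree_prod_primes p Finset.univ (fun i _ => hprime i)
    intro i _ j _ h
    exact hpinj h
  have hqP : Nat.Coprime q (∏ i, p i) := by
    apply Nat.Coprime.prod_right
    intro i _
    refine (Nat.coprime_primes hq (hprime i)).mpr ?_
    intro h
    have := hpiN i
    omega
  have hm₁sf : Squarefree m₁ := by
    rw [hm₁]
    split
    · rw [mul_comm]
      exact (Nat.squarefree_mul hqP).mpr ⟨hq.squarefree, hPsf⟩
    · exact hPsf
  have hm₁pos : 0 < m₁ := hm₁sf.ne_zero.bot_lt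
  have hpm₁ : ∀ i, p i ∣ m₁ := by
    intro i
    have h1 : p i ∣ ∏ j, p j := Finset.dvd_prod_of_mem p (Finset.mem_univ i)
    rw [hm₁]
    split
    · exact h1.mul_right q
    · exact h1
  have hμP : μ (∏ i, p i) = (-1) ^ t := by
    rw [isMultiplicative_moebius.map_prod p Finset.univ hpair]
    rw [Finset.prod_congr rfl fun i _ => moebius_apply_prime (hprime i)]
    simp
  have hμm₁ : μ m₁ = -1 := by
    rw [hm₁]
    by_cases he : Even t
    · rw [if_pos he, isMultiplicative_moebius.map_mul_of_coprime hqP.symm, hμP,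
        moebius_apply_prime hq, he.neg_one_pow]
      ring
    · rw [if_neg he, hμP, (Nat.not_even_iff_odd.mp he).neg_one_pow]
  have hcop : Nat.Coprime m₁ m := by
    rw [hm₁]
    split
    · exact Nat.Coprime.mul (Nat.Coprime.prod_left fun i _ => hpcop i) hqcop
    · exact Nat.Coprime.prod_left fun i _ => hpcop i
  have hμm₁p : ∀ i, μ (m₁ / p i) = 1 := by
    intro i
    have hd := hpm₁ i
    have hcp : Nat.Coprime (p i) (m₁ / p i) := by
      rw [Nat.Prime.coprime_iff_not_dvd (hprime i)]
      intro hdvd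
      have : p i * p i ∣ m₁ := by
        obtain ⟨c, hc⟩ := hdvd
        obtain ⟨d, hdd⟩ := hd
        refine ⟨c, ?_⟩
        rw [hdd] at hc ⊢
        rw [Nat.mul_div_cancel_left d (hppos i)] at hc
        rw [hc]; ring
      exact (hprime i).one_lt.ne' (Nat.isUnit_iff.mp (hm₁sf (p i) this))
    have heq : m₁ = p i * (m₁ / p i) := (Nat.mul_div_cancel' hd).symm
    have := hμm₁
    rw [heq, isMultiplicative_moebius.map_mul_of_coprime hcp,
      moebius_apply_prime (hprime i)] at this
    omega
  have hprm₁ : ∀ r, r.Prime → r ∣ m₁ → (∃ i, r = p i) ∨ 2 * p ⟨0, ht⟩ < r := by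
    intro r hr hdvd
    rw [hm₁] at hdvd
    have hP : r ∣ (∏ i, p i) → ∃ i, r = p i := by
      intro h
      obtain ⟨i, _, hi⟩ := (Prime.dvd_finset_prod_iff hr.prime p).mp h
      exact ⟨i, ((Nat.prime_dvd_prime_iff_eq hr (hprime i)).mp hi)⟩
    by_cases he : Even t
    · rw [if_pos he] at hdvd
      rcases (Nat.Prime.dvd_mul hr).mp hdvd with h | h
      · exact Or.inl (hP h)
      · right
        rw [(Nat.prime_dvd_prime_iff_eq hr hq).mp h]
        exact hq2
    · rw [if_neg he] at hdvd
      exact Or.inl (hP hdvd)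
  set n := m₁ * m with hn
  have hn0 : 0 < n := Nat.mul_pos hm₁pos (by omega)
  have hn1 : 1 < n := by
    calc 1 < m := hm
    _ = 1 * m := (one_mul m).symm
    _ ≤ m₁ * m := Nat.mul_le_mul_right m hm₁pos
  have hdiv_class : ∀ d, d ∣ n → d < 2 * p ⟨0, ht⟩ → (d ∣ m ∨ ∃ i, d = p i) := by
    intro d hd hdN
    have hd0 : d ≠ 0 := by
      rintro rfl
      rw [Nat.zero_dvd] at hd
      omega
    obtain ⟨a, b, ha, hb, hab⟩ := Nat.dvd_mul.mp hd
    have ha0 : a ≠ 0 := by rintro rfl; simp at hab; omega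
    have hb0 : b ≠ 0 := by rintro rfl; simp at hab; omega
    have had : a ≤ d := by
      rw [← hab]
      exact Nat.le_mul_of_pos_right a (by omega)
    by_cases ha1 : a = 1
    · left; rw [← hab, ha1, one_mul]; exact hb
    · have hr := Nat.minFac_prime ha1
      have hrm₁ : a.minFac ∣ m₁ := (Nat.minFac_dvd a).trans ha
      rcases hprm₁ _ hr hrm₁ with ⟨i, hi⟩ | hbig
      · -- minFac a = p i
        have hpa : p i ∣ a := hi ▸ Nat.minFac_dvd a
        obtain ⟨a', haa⟩ := hpa
        have ha'0 : a' ≠ 0 := by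
          rintro h
          rw [h, mul_zero] at haa
          exact ha0 haa
        by_cases ha'1 : a' = 1
        · rw [ha'1, mul_one] at haa
          by_cases hb1 : b = 1
          · right; exact ⟨i, by rw [← hab, haa, hb1, mul_one]⟩
          · exfalso
            have hb2 : 2 ≤ b := by omega
            have : 2 * p ⟨0, ht⟩ ≤ d := by
              calc 2 * p ⟨0, ht⟩ ≤ 2 * p i := by have := hpge i; omega
              _ ≤ b * p i := Nat.mul_le_mul_right _ hb2
              _ = a * b := by rw [haa]; ring
              _ = d := hab
            omega
        · exfalso
          have ha'2 : 2 ≤ a' := by omega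
          have hr' := Nat.minFac_prime ha'1
          have ha'm₁ : a' ∣ m₁ := (haa ▸ Dvd.intro_left (p i) rfl : a' ∣ a).trans ha
          have hr'm₁ : a'.minFac ∣ m₁ := (Nat.minFac_dvd a').trans ha'm₁
          have hr'3 : 3 ≤ a'.minFac := by
            rcases hprm₁ _ hr' hr'm₁ with ⟨j, hj⟩ | hbig'
            · have := hpge j; omega
            · omega
          have : 2 * p ⟨0, ht⟩ < d := by
            calc 2 * p ⟨0, ht⟩ < 3 * p ⟨0, ht⟩ := by omega
            _ ≤ a'.minFac * p i := Nat.mul_le_mul hr'3 (hpge i)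
            _ ≤ a' * p i := Nat.mul_le_mul_right _ (Nat.minFac_le (by omega))
            _ = a := by rw [haa]; ring
            _ ≤ d := had
          omega
      · exfalso
        have : a.minFac ≤ a := Nat.minFac_le (by omega)
        omega
  have hfilter : (n.divisors.filter (fun d => d < 2 * p ⟨0, ht⟩))
      = m.divisors ∪ Finset.image p Finset.univ := by
    ext d
    simp only [Finset.mem_filter, Nat.mem_divisors, Finset.mem_union, Finset.mem_image,
      Finset.mem_univ, true_and]
    constructor
    · rintro ⟨⟨hdvd, _⟩, hlt⟩
      rcases hdiv_class d hdvd hlt with h | ⟨i, rfl⟩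
      · exact Or.inl ⟨h, by omega⟩
      · exact Or.inr ⟨i, rfl⟩
    · rintro (⟨hdvd, _⟩ | ⟨i, rfl⟩)
      · refine ⟨⟨Dvd.dvd.mul_left hdvd m₁, by omega⟩, ?_⟩
        have := Nat.le_of_dvd (by omega) hdvd
        have := hpge ⟨0, ht⟩
        omega
      · exact ⟨⟨(hpm₁ i).mul_right m, by omega⟩, hpiN i⟩
  -- the Möbius product decomposition
  have hkey := cu_eq_prod hn1
  rw [← Finset.prod_filter_mul_prod_filter_not n.divisors
    (fun d => d < 2 * p ⟨0, ht⟩) (fun b => (vu b) ^ ((μ (n / b) : ℤ))), hfilter] at hkey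
  have hdisj : Disjoint m.divisors (Finset.image p Finset.univ) := by
    rw [Finset.disjoint_left]
    intro d hd hd2
    simp only [Finset.mem_image, Finset.mem_univ, true_and] at hd2
    obtain ⟨i, rfl⟩ := hd2
    have := Nat.le_of_dvd (by omega) (Nat.mem_divisors.mp hd).1
    have := hpge i
    omega
  rw [Finset.prod_union hdisj] at hkey
  -- identify the m-divisor part with (cu m)⁻¹
  have hsmall1 : ∏ b ∈ m.divisors, (vu b) ^ ((μ (n / b) : ℤ)) = (cu m)⁻¹ := by
    have : ∀ b ∈ m.divisors, (vu b) ^ ((μ (n / b) : ℤ)) = ((vu b) ^ ((μ (m / b) : ℤ)))⁻¹ := by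
      intro b hb
      obtain ⟨hbd, -⟩ := Nat.mem_divisors.mp hb
      have h1 : n / b = m₁ * (m / b) := by
        rw [hn, Nat.mul_div_assoc m₁ hbd]
      have h2 : Nat.Coprime m₁ (m / b) :=
        Nat.Coprime.coprime_dvd_right (Nat.div_dvd_of_dvd hbd) hcop
      rw [h1, isMultiplicative_moebius.map_mul_of_coprime h2, hμm₁, neg_one_mul, zpow_neg]
    rw [Finset.prod_congr rfl this, Finset.prod_inv_distrib, ← cu_eq_prod hm]
  -- identify the p i part
  have hsmall2 : ∏ b ∈ Finset.image p Finset.univ, (vu b) ^ ((μ (n / b) : ℤ))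
      = ∏ i, (vu (p i)) ^ ((μ m : ℤ)) := by
    rw [Finset.prod_image (fun i _ j _ h => hpinj h)]
    refine Finset.prod_congr rfl fun i _ => ?_
    have h1 : n / p i = (m₁ / p i) * m := by
      rw [hn, mul_comm m₁ m, Nat.mul_div_assoc m (hpm₁ i), mul_comm]
    have h2 : Nat.Coprime (m₁ / p i) m :=
      Nat.Coprime.coprime_dvd_left (Nat.div_dvd_of_dvd (hpm₁ i)) hcop
    rw [h1, isMultiplicative_moebius.map_mul_of_coprime h2, hμm₁p i, one_mul]
  rw [hsmall1, hsmall2] at hkey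
  -- the large-divisor part is congruent to 1
  set N := 2 * p ⟨0, ht⟩ with hNdef
  set sU : (PowerSeries ℤ)ˣ :=
    ∏ b ∈ n.divisors.filter (fun d => ¬ d < N), (vu b) ^ ((μ (n / b) : ℤ)) with hsU
  have hsUmem : sU ∈ sgp N := by
    apply Subgroup.prod_mem
    intro b hb
    simp only [Finset.mem_filter, Nat.mem_divisors] at hb
    refine Subgroup.zpow_mem _ (vu_mem_sgp ?_ (by omega)) _
    exact Nat.pos_of_dvd_of_pos hb.1.1 hn0
  have hμ : (μ m : ℤ) = 1 ∨ (μ m : ℤ) = -1 := by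
    rw [moebius_apply_of_squarefree hsf]
    rcases Nat.even_or_odd (cardFactors m) with he | ho
    · exact Or.inl he.neg_one_pow
    · exact Or.inr ho.neg_one_pow
  have hW : (PowerSeries.X : PowerSeries ℤ) ^ N ∣
      ((∏ i, vu (p i) ^ ((μ m : ℤ)) : (PowerSeries ℤ)ˣ) : PowerSeries ℤ)
        - (1 - ((μ m : ℤ) : PowerSeries ℤ) * ∑ i, (PowerSeries.X : PowerSeries ℤ) ^ (p i)) :=
    prod_vu_congr N (μ m) hμ p hppos
      (fun i j => by have := hpge i; have := hpge j; omega) Finset.univ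
  -- identify g with the inverse unit of the cyclotomic polynomial
  have hgval : g = ((cu m)⁻¹ : (PowerSeries ℤ)ˣ) := by
    have h1 : ((cu m : (PowerSeries ℤ)ˣ) : PowerSeries ℤ) * g = 1 := by rw [cu_val]; exact hg
    have h2 := congrArg (fun x => (((cu m)⁻¹ : (PowerSeries ℤ)ˣ) : PowerSeries ℤ) * x) h1
    simp only [mul_one] at h2
    rw [← mul_assoc, (cu m).inv_mul, one_mul] at h2
    exact h2
  -- pass to power series
  have hval := congrArg (Units.val) hkey
  rw [Units.val_mul, Units.val_mul, cu_val, ← hgval] at hval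
  set Wv : PowerSeries ℤ := ((∏ i, vu (p i) ^ ((μ m : ℤ)) : (PowerSeries ℤ)ˣ) : PowerSeries ℤ)
    with hWv
  set W₀ : PowerSeries ℤ :=
    1 - ((μ m : ℤ) : PowerSeries ℤ) * ∑ i, (PowerSeries.X : PowerSeries ℤ) ^ (p i) with hW₀
  have hsUdvd : (PowerSeries.X : PowerSeries ℤ) ^ N ∣ ((sU : (PowerSeries ℤ)ˣ) : PowerSeries ℤ) - 1 :=
    hsUmem
  have hfin : (PowerSeries.X : PowerSeries ℤ) ^ N ∣
      ((cyclotomic n ℤ : Polynomial ℤ) : PowerSeries ℤ) - g * W₀ := by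
    have heq : ((cyclotomic n ℤ : Polynomial ℤ) : PowerSeries ℤ) - g * W₀
        = (g * Wv) * (((sU : (PowerSeries ℤ)ˣ) : PowerSeries ℤ) - 1) + g * (Wv - W₀) := by
      rw [hval]; ring
    rw [heq]
    exact dvd_add (hsUdvd.mul_left _) (hW.mul_left _)
  obtain ⟨r, hr⟩ := hfin
  have hcyc : ((cyclotomic n ℤ : Polynomial ℤ) : PowerSeries ℤ)
      = (PowerSeries.X : PowerSeries ℤ) ^ N * r + g * W₀ := by
    rw [← hr]; ring
  -- periodicity of g
  have hper : ∀ s j, PowerSeries.coeff (j + m * s) g = PowerSeries.coeff j g := by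
    intro s
    induction s with
    | zero => simp
    | succ s ih =>
      intro j
      have h1 := g_periodic hm hg (j + m * s)
      have h2 : j + m * (s + 1) = (j + m * s) + m := by ring
      rw [h2, h1, ih j]
  have hcoeq : ∀ i, PowerSeries.coeff (k - p i) g = PowerSeries.coeff (k - 1) g := by
    intro i
    have hc : p i % m = 1 % m := hcong i
    rw [Nat.mod_eq_of_lt hm] at hc
    have hdm := Nat.div_add_mod (p i) m
    have hple' : p i ≤ k := le_trans (hple i) hk₁
    have h1 := hper (p i / m) (k - p i)
    have harith : (k - p i) + m * (p i / m) = k - 1 := by omega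
    rw [harith] at h1
    exact h1.symm
  -- extract the coefficient
  have hco := congrArg (PowerSeries.coeff k) hcyc
  rw [map_add, PowerSeries.coeff_X_pow_mul' r N k, if_neg (by omega)] at hco
  have hgW₀ : g * W₀ = g - ((μ m : ℤ) : PowerSeries ℤ)
      * (g * ∑ i, (PowerSeries.X : PowerSeries ℤ) ^ (p i)) := by
    rw [hW₀]; ring
  rw [Finset.mul_sum] at hgW₀
  rw [hgW₀, map_sub, ← map_intCast (PowerSeries.C (R := ℤ)) (μ m), PowerSeries.coeff_C_mul,
    map_sum] at hco
  have hterm : ∀ i ∈ (Finset.univ : Finset (Fin t)),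
      PowerSeries.coeff k (g * (PowerSeries.X : PowerSeries ℤ) ^ (p i))
        = PowerSeries.coeff (k - 1) g := by
    intro i _
    rw [PowerSeries.coeff_mul_X_pow' g (p i) k, if_pos (le_trans (hple i) hk₁)]
    exact hcoeq i
  rw [Finset.sum_congr rfl hterm, Finset.sum_const, Finset.card_univ, Fintype.card_fin,
    nsmul_eq_mul] at hco
  rw [Polynomial.coeff_coe] at hco
  rw [hco]
  push_cast
  ring
end

section
/- Let m be squarefree with μ(m) = 1 and m > 1, and let q_1 < q_2 be the two smallest prime divisors of m. Then the power series 1/Φ_m(x) is congruent to 1 + x + x^2 + ⋯ + x^{q_1 - 1} - x^{q_2} - x^{q_2+1} modulo x^{q_2 + 2}. -/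
open Polynomial ArithmeticFunction
open scoped ArithmeticFunction.Moebius

private lemma big_prod_structure (N : ℕ) (S : Finset ℕ) (hS : ∀ d ∈ S, N ≤ d) :
    ∃ c A, c * c = 1 ∧
      (∏ d ∈ S, ((PowerSeries.X : PowerSeries ℤ) ^ d - 1)) =
        PowerSeries.C (R := ℤ) c + PowerSeries.X ^ N * A := by
  classical
  refine Finset.prod_induction _ (fun f => ∃ c A, c * c = 1 ∧
      f = PowerSeries.C (R := ℤ) c + PowerSeries.X ^ N * A) ?_ ?_ ?_
  · rintro a b ⟨c1, A1, hc1, rfl⟩ ⟨c2, A2, hc2, rfl⟩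
    refine ⟨c1 * c2, PowerSeries.C (R := ℤ) c1 * A2 + A1 * PowerSeries.C (R := ℤ) c2
      + PowerSeries.X ^ N * (A1 * A2), by nlinarith, ?_⟩
    rw [map_mul]
    ring
  · exact ⟨1, 0, by norm_num, by simp⟩
  · intro d hd
    refine ⟨-1, PowerSeries.X ^ (d - N), by norm_num, ?_⟩
    rw [map_neg, map_one, ← pow_add, Nat.add_sub_cancel' (hS d hd)]
    ring

theorem cyclotomic_inv_coeff_of_moebius_one (m : ℕ) (hm : 1 < m) (hsf : Squarefree m)
    (hμ : μ m = 1) (q₁ q₂ : ℕ) (hq₁ : q₁.Prime) (hq₂ : q₂.Prime)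
    (hq₁m : q₁ ∣ m) (hq₂m : q₂ ∣ m) (hlt : q₁ < q₂)
    (hsmall : ∀ p : ℕ, p.Prime → p ∣ m → p = q₁ ∨ q₂ ≤ p)
    (g : PowerSeries ℤ) (hg : (cyclotomic m ℤ : PowerSeries ℤ) * g = 1) :
    ∀ k < q₂ + 2, PowerSeries.coeff k g =
      if k < q₁ then 1 else if k < q₂ then 0 else -1 := by
  classical
  have hm0 : m ≠ 0 := by omega
  have h2q₁ := hq₁.two_le
  have h2q₂ := hq₂.two_le
  set Dp := m.divisors.filter (fun d => μ (m / d) = 1) with hDpdef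
  set Dm := m.divisors.filter (fun d => ¬ μ (m / d) = 1) with hDmdef
  -- basic moebius facts
  have hcop : ∀ d, d ∣ m → Nat.Coprime d (m / d) := by
    intro d hd
    have hsq : Nat.gcd d (m / d) * Nat.gcd d (m / d) ∣ m := by
      have := mul_dvd_mul (Nat.gcd_dvd_left d (m / d)) (Nat.gcd_dvd_right d (m / d))
      rwa [Nat.mul_div_cancel' hd] at this
    exact Nat.isUnit_iff.mp (hsf _ hsq)
  have hmu : ∀ d, d ∣ m → μ d * μ (m / d) = 1 := by
    intro d hd
    rw [← isMultiplicative_moebius.map_mul_of_coprime (hcop d hd),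
      Nat.mul_div_cancel' hd, hμ]
  have hmupm : ∀ d, d ∣ m → μ (m / d) = 1 ∨ μ (m / d) = -1 := by
    intro d hd
    have hsq : Squarefree (m / d) := hsf.squarefree_of_dvd (Nat.div_dvd_of_dvd hd)
    have : IsUnit (μ (m / d)) := by
      rw [moebius_apply_of_squarefree hsq]
      exact (isUnit_one.neg).pow _
    exact Int.isUnit_iff.mp this
  -- the polynomial identity by Möbius inversion
  have hne : ∀ d, d ∈ m.divisors → algebraMap ℤ[X] (RatFunc ℤ) (X ^ d - 1) ≠ 0 := by
    intro d hd
    rw [Ne, IsFractionRing.to_map_eq_zero_iff]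
    have hd1 : d ≠ 0 := (Nat.pos_of_mem_divisors hd).ne'
    have hX : (X ^ d - 1 : ℤ[X]) = X ^ d - C 1 := by simp
    rw [hX]
    exact (monic_X_pow_sub_C 1 hd1).ne_zero
  have hpoly : cyclotomic m ℤ * ∏ d ∈ Dm, (X ^ d - 1) = ∏ d ∈ Dp, (X ^ d - 1) := by
    have h := cyclotomic_eq_prod_X_pow_sub_one_pow_moebius (n := m) ℤ
    rw [Nat.prod_divisorsAntidiagonal'
      (f := fun a b => algebraMap ℤ[X] (RatFunc ℤ) (X ^ b - 1) ^ μ a)] at h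
    rw [← Finset.prod_filter_mul_prod_filter_not m.divisors (fun d => μ (m / d) = 1)] at h
    have e1 : ∏ d ∈ Dp, algebraMap ℤ[X] (RatFunc ℤ) (X ^ d - 1) ^ μ (m / d)
        = algebraMap ℤ[X] (RatFunc ℤ) (∏ d ∈ Dp, (X ^ d - 1)) := by
      rw [map_prod]
      refine Finset.prod_congr rfl fun d hd => ?_
      rw [(Finset.mem_filter.mp hd).2, zpow_one]
    have e2 : ∏ d ∈ Dm, algebraMap ℤ[X] (RatFunc ℤ) (X ^ d - 1) ^ μ (m / d)
        = (algebraMap ℤ[X] (RatFunc ℤ) (∏ d ∈ Dm, (X ^ d - 1)))⁻¹ := by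
      rw [map_prod, ← Finset.prod_inv_distrib]
      refine Finset.prod_congr rfl fun d hd => ?_
      obtain ⟨hdm, hdnot⟩ := Finset.mem_filter.mp hd
      have hmd : μ (m / d) = -1 :=
        (hmupm d (Nat.dvd_of_mem_divisors hdm)).resolve_left hdnot
      rw [hmd, zpow_neg_one]
    rw [e1, e2] at h
    have hFm : algebraMap ℤ[X] (RatFunc ℤ) (∏ d ∈ Dm, (X ^ d - 1)) ≠ 0 := by
      rw [map_prod]
      exact Finset.prod_ne_zero_iff.mpr fun d hd => hne d (Finset.mem_filter.mp hd).1
    apply IsFractionRing.injective ℤ[X] (RatFunc ℤ)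
    rw [map_mul, h, inv_mul_cancel_right₀ hFm]
  -- move to power series
  have hcoe : ∀ S : Finset ℕ, ((∏ d ∈ S, ((X : ℤ[X]) ^ d - 1) : ℤ[X]) : PowerSeries ℤ)
      = ∏ d ∈ S, ((PowerSeries.X : PowerSeries ℤ) ^ d - 1) := by
    intro S
    rw [← Polynomial.coeToPowerSeries.ringHom_apply, map_prod]
    refine Finset.prod_congr rfl fun d _ => ?_
    rw [Polynomial.coeToPowerSeries.ringHom_apply, Polynomial.coe_sub,
      Polynomial.coe_pow, Polynomial.coe_X, Polynomial.coe_one]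
  have hps : (cyclotomic m ℤ : PowerSeries ℤ)
        * ∏ d ∈ Dm, ((PowerSeries.X : PowerSeries ℤ) ^ d - 1)
      = ∏ d ∈ Dp, ((PowerSeries.X : PowerSeries ℤ) ^ d - 1) := by
    have h := congrArg (fun p : ℤ[X] => (p : PowerSeries ℤ)) hpoly
    simpa only [Polynomial.coe_mul, hcoe] using h
  have hgQ : g * ∏ d ∈ Dp, ((PowerSeries.X : PowerSeries ℤ) ^ d - 1)
      = ∏ d ∈ Dm, ((PowerSeries.X : PowerSeries ℤ) ^ d - 1) := by
    rw [← hps, ← mul_assoc, mul_comm g, hg, one_mul]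
  -- memberships
  have h1Dp : 1 ∈ Dp := by
    rw [hDpdef, Finset.mem_filter, Nat.mem_divisors]
    exact ⟨⟨one_dvd m, hm0⟩, by rwa [Nat.div_one]⟩
  have hq1Dm : q₁ ∈ Dm := by
    rw [hDmdef, Finset.mem_filter, Nat.mem_divisors]
    refine ⟨⟨hq₁m, hm0⟩, ?_⟩
    have h1 := hmu q₁ hq₁m
    rw [moebius_apply_prime hq₁] at h1
    omega
  have hq2Dm : q₂ ∈ Dm := by
    rw [hDmdef, Finset.mem_filter, Nat.mem_divisors]
    refine ⟨⟨hq₂m, hm0⟩, ?_⟩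
    have h1 := hmu q₂ hq₂m
    rw [moebius_apply_prime hq₂] at h1
    omega
  -- composite divisors are large
  have hcomp : ∀ d, d ∣ m → ¬ d.Prime → d ≠ 1 → 2 * q₂ ≤ d := by
    intro d hdm hdp hd1
    have hd0 : d ≠ 0 := by rintro rfl; exact hm0 (Nat.eq_zero_of_zero_dvd hdm)
    have hp := Nat.minFac_prime hd1
    have hpd : d.minFac ∣ d := Nat.minFac_dvd d
    have he1 : d / d.minFac ≠ 1 := by
      intro h
      have h2 := Nat.eq_mul_of_div_eq_right hpd h
      rw [mul_one] at h2
      exact hdp (h2 ▸ hp)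
    have hr := Nat.minFac_prime he1
    have hrd : (d / d.minFac).minFac ∣ d / d.minFac := Nat.minFac_dvd _
    have hprd : d.minFac * (d / d.minFac).minFac ∣ d := (Nat.dvd_div_iff_mul_dvd hpd).mp hrd
    have hpr : d.minFac ≠ (d / d.minFac).minFac := by
      rintro heq
      have hdd : d.minFac * d.minFac ∣ d := by nth_rewrite 2 [heq]; exact hprd
      have : IsUnit d.minFac := hsf _ (dvd_trans hdd hdm)
      exact hp.one_lt.ne' (Nat.isUnit_iff.mp this)
    have hled : d.minFac * (d / d.minFac).minFac ≤ d :=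
      Nat.le_of_dvd (Nat.pos_of_ne_zero hd0) hprd
    have hrm : (d / d.minFac).minFac ∣ m :=
      (hrd.trans (Nat.div_dvd_of_dvd hpd)).trans hdm
    rcases hsmall _ hp (hpd.trans hdm) with hcase1 | hcase1 <;>
      rcases hsmall _ hr hrm with hcase2 | hcase2
    · exact absurd (hcase1.trans hcase2.symm) hpr
    · calc 2 * q₂ ≤ d.minFac * (d / d.minFac).minFac :=
            Nat.mul_le_mul hp.two_le hcase2
        _ ≤ d := hled
    · calc 2 * q₂ ≤ (d / d.minFac).minFac * d.minFac :=
            Nat.mul_le_mul hr.two_le hcase1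
        _ = d.minFac * (d / d.minFac).minFac := mul_comm _ _
        _ ≤ d := hled
    · calc 2 * q₂ ≤ d.minFac * (d / d.minFac).minFac :=
            Nat.mul_le_mul (le_trans (by omega) hcase1) hcase2
        _ ≤ d := hled
  -- large-element bounds
  have hbigp : ∀ d ∈ Dp.erase 1, q₂ + 2 ≤ d := by
    intro d hd
    obtain ⟨hd1, hdf⟩ := Finset.mem_erase.mp hd
    obtain ⟨hddvd, hmud⟩ := Finset.mem_filter.mp hdf
    have hdm : d ∣ m := Nat.dvd_of_mem_divisors hddvd
    have hdnp : ¬ d.Prime := by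
      intro hdp
      have h1 := hmu d hdm
      rw [moebius_apply_prime hdp, hmud] at h1
      omega
    have := hcomp d hdm hdnp hd1
    omega
  have hbigm : ∀ d ∈ (Dm.erase q₂).erase q₁, q₂ + 2 ≤ d := by
    intro d hd
    obtain ⟨hdq1, hd2⟩ := Finset.mem_erase.mp hd
    obtain ⟨hdq2, hdf⟩ := Finset.mem_erase.mp hd2
    obtain ⟨hddvd, hmud⟩ := Finset.mem_filter.mp hdf
    have hdm : d ∣ m := Nat.dvd_of_mem_divisors hddvd
    have hd1 : d ≠ 1 := by
      rintro rfl
      rw [Nat.div_one, hμ] at hmud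
      exact hmud rfl
    by_cases hdp : d.Prime
    · rcases hsmall d hdp hdm with h | h
      · exact absurd h hdq1
      · have hdq2' : q₂ < d := lt_of_le_of_ne h (Ne.symm hdq2)
        have hq2odd : Odd q₂ := hq₂.odd_of_ne_two (by omega)
        rcases Nat.lt_or_ge d (q₂ + 2) with hlt2 | hge
        · have hde : d = q₂ + 1 := by omega
          have : Even d := by rw [hde]; exact hq2odd.add_one
          have := (Nat.Prime.even_iff hdp).mp this
          omega
        · exact hge
    · have := hcomp d hdm hdp hd1
      omega
  -- split off small factors
  have hq1Dm' : q₁ ∈ Dm.erase q₂ := Finset.mem_erase.mpr ⟨by omega, hq1Dm⟩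
  obtain ⟨cp, A, hcp2, hA⟩ := big_prod_structure (q₂ + 2) (Dp.erase 1) hbigp
  obtain ⟨cm, B, hcm2, hB⟩ := big_prod_structure (q₂ + 2) ((Dm.erase q₂).erase q₁) hbigm
  have hQp : ∏ d ∈ Dp, ((PowerSeries.X : PowerSeries ℤ) ^ d - 1)
      = (PowerSeries.X ^ 1 - 1) * (PowerSeries.C (R := ℤ) cp + PowerSeries.X ^ (q₂ + 2) * A) := by
    rw [← Finset.mul_prod_erase Dp _ h1Dp, hA]
  have hQm : ∏ d ∈ Dm, ((PowerSeries.X : PowerSeries ℤ) ^ d - 1)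
      = (PowerSeries.X ^ q₂ - 1) * ((PowerSeries.X ^ q₁ - 1)
          * (PowerSeries.C (R := ℤ) cm + PowerSeries.X ^ (q₂ + 2) * B)) := by
    rw [← Finset.mul_prod_erase Dm _ hq2Dm, ← Finset.mul_prod_erase _ _ hq1Dm', hB]
  rw [hQp, hQm] at hgQ
  -- coefficient extraction
  have hco : ∀ (f A : PowerSeries ℤ) (c : ℤ) (k : ℕ), k < q₂ + 2 →
      PowerSeries.coeff k (f * (PowerSeries.C (R := ℤ) c + PowerSeries.X ^ (q₂ + 2) * A))
        = c * PowerSeries.coeff k f := by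
    intro f A c k hk
    rw [mul_add, map_add, PowerSeries.coeff_mul_C]
    have hz : PowerSeries.coeff k (f * (PowerSeries.X ^ (q₂ + 2) * A)) = 0 := by
      have hdvd : (PowerSeries.X : PowerSeries ℤ) ^ (q₂ + 2) ∣
          f * (PowerSeries.X ^ (q₂ + 2) * A) := ⟨f * A, by ring⟩
      exact PowerSeries.X_pow_dvd_iff.mp hdvd k hk
    rw [hz, add_zero, mul_comm]
  have key : ∀ k, k < q₂ + 2 →
      cp * PowerSeries.coeff k (g * (PowerSeries.X ^ 1 - 1))
        = cm * PowerSeries.coeff k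
            ((PowerSeries.X ^ q₂ - 1) * (PowerSeries.X ^ q₁ - 1)) := by
    intro k hk
    have h := congrArg (PowerSeries.coeff k) hgQ
    rw [← mul_assoc, ← mul_assoc, hco _ _ _ k hk, hco _ _ _ k hk] at h
    exact h
  have hg0 : PowerSeries.constantCoeff (R := ℤ) g = 1 := by
    have h := congrArg (PowerSeries.constantCoeff (R := ℤ)) hg
    rw [map_mul, map_one] at h
    have hc : PowerSeries.constantCoeff (R := ℤ) ((cyclotomic m ℤ : PowerSeries ℤ)) = 1 := by
      rw [← PowerSeries.coeff_zero_eq_constantCoeff_apply, Polynomial.coeff_coe,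
        cyclotomic_coeff_zero ℤ hm]
    rw [hc, one_mul] at h
    exact h
  -- constant coefficients determine sign relation
  have hL0 : PowerSeries.coeff 0 (g * (PowerSeries.X ^ 1 - 1)) = -1 := by
    rw [PowerSeries.coeff_zero_eq_constantCoeff_apply, map_mul, hg0, one_mul,
      map_sub, map_pow, PowerSeries.constantCoeff_X, map_one]
    norm_num
  have hR0 : PowerSeries.coeff (R := ℤ) 0
      ((PowerSeries.X ^ q₂ - 1) * (PowerSeries.X ^ q₁ - 1)) = 1 := by
    rw [PowerSeries.coeff_zero_eq_constantCoeff_apply, map_mul, map_sub, map_sub,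
      map_pow, map_pow, PowerSeries.constantCoeff_X, map_one]
    rw [zero_pow (by omega : q₂ ≠ 0), zero_pow (by omega : q₁ ≠ 0)]
    norm_num
  have hcmcp : cm = -cp := by
    have h := key 0 (by omega)
    rw [hL0, hR0] at h
    omega
  have key2 : ∀ k, k < q₂ + 2 →
      PowerSeries.coeff k (g * (PowerSeries.X ^ 1 - 1))
        = - PowerSeries.coeff (R := ℤ) k ((PowerSeries.X ^ q₂ - 1) * (PowerSeries.X ^ q₁ - 1)) := by
    intro k hk
    have h := key k hk
    rw [hcmcp] at h
    rcases mul_self_eq_one_iff.mp hcp2 with h1 | h1 <;> rw [h1] at h <;> linarith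
  -- coefficients of the right-hand side
  have hR : ∀ k, k < q₂ + 2 →
      PowerSeries.coeff (R := ℤ) k ((PowerSeries.X ^ q₂ - 1) * (PowerSeries.X ^ q₁ - 1))
        = (if k = 0 then 1 else 0) - (if k = q₁ then 1 else 0) - (if k = q₂ then 1 else 0) := by
    intro k hk
    have hexp : (PowerSeries.X ^ q₂ - 1) * ((PowerSeries.X : PowerSeries ℤ) ^ q₁ - 1)
        = PowerSeries.X ^ (q₂ + q₁) + 1 - PowerSeries.X ^ q₁ - PowerSeries.X ^ q₂ := by
      rw [pow_add]; ring
    rw [hexp, map_sub, map_sub, map_add, PowerSeries.coeff_X_pow, PowerSeries.coeff_X_pow,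
      PowerSeries.coeff_X_pow, PowerSeries.coeff_one]
    have : k ≠ q₂ + q₁ := by omega
    rw [if_neg this]
    ring
  -- final induction
  intro k
  induction k with
  | zero =>
    intro _
    rw [PowerSeries.coeff_zero_eq_constantCoeff_apply, hg0, if_pos (by omega : 0 < q₁)]
  | succ k ih =>
    intro hk
    have IH := ih (by omega)
    have h1 := key2 (k + 1) hk
    rw [hR (k + 1) hk] at h1
    rw [pow_one, mul_sub, mul_one, map_sub, PowerSeries.coeff_succ_mul_X, IH] at h1
    split_ifs at h1 ⊢ <;> first | exact ‹False›.elim | omega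
end

section
/- Let m > 1 be squarefree with μ(m) = -1. Then 1/Φ_m(x) ≡ 1 - x (mod x^3) if m is odd, and 1/Φ_m(x) ≡ 1 - x + x^2 (mod x^3) if m is even. -/
open Polynomial ArithmeticFunction Finset
open scoped ArithmeticFunction.Moebius

private lemma mulc1 (p q : Polynomial ℤ) :
    (p * q).coeff 1 = p.coeff 0 * q.coeff 1 + p.coeff 1 * q.coeff 0 := by
  rw [Polynomial.coeff_mul, Finset.Nat.sum_antidiagonal_eq_sum_range_succ_mk]
  simp [Finset.sum_range_succ]

private lemma mulc2 (p q : Polynomial ℤ) :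
    (p * q).coeff 2 = p.coeff 0 * q.coeff 2 + p.coeff 1 * q.coeff 1 + p.coeff 2 * q.coeff 0 := by
  rw [Polynomial.coeff_mul, Finset.Nat.sum_antidiagonal_eq_sum_range_succ_mk]
  simp [Finset.sum_range_succ]

private lemma prod_coeffs (s : Finset ℕ) (f : ℕ → Polynomial ℤ)
    (h0 : ∀ i ∈ s, (f i).coeff 0 = 1) :
    (∏ i ∈ s, f i).coeff 0 = 1 ∧
    (∏ i ∈ s, f i).coeff 1 = ∑ i ∈ s, (f i).coeff 1 ∧
    2 * (∏ i ∈ s, f i).coeff 2 =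
      2 * ∑ i ∈ s, (f i).coeff 2 + (∑ i ∈ s, (f i).coeff 1) ^ 2
        - ∑ i ∈ s, (f i).coeff 1 ^ 2 := by
  induction s using Finset.cons_induction with
  | empty => simp [Polynomial.coeff_one]
  | cons a s ha ih =>
    obtain ⟨i0, i1, i2⟩ := ih (fun i hi => h0 i (Finset.mem_cons_of_mem hi))
    have ha0 : (f a).coeff 0 = 1 := h0 a (Finset.mem_cons_self a s)
    rw [Finset.prod_cons, Finset.sum_cons, Finset.sum_cons, Finset.sum_cons]
    refine ⟨?_, ?_, ?_⟩
    · rw [Polynomial.mul_coeff_zero, ha0, i0, one_mul]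
    · rw [mulc1, ha0, i0, i1]; ring
    · rw [mulc2, ha0, i0, i1]
      nlinarith [i2]

private lemma Q_eq (n : ℕ) (hn : 2 ≤ n) :
    ∏ d ∈ n.divisors.erase 1, cyclotomic d ℤ = ∑ i ∈ Finset.range n, X ^ i := by
  have hpos : 0 < n := by omega
  have h := prod_cyclotomic_eq_X_pow_sub_one hpos ℤ
  have h1 : 1 ∈ n.divisors := Nat.one_mem_divisors.mpr hpos.ne'
  rw [← Finset.prod_erase_mul _ _ h1, cyclotomic_one] at h
  have hg := geom_sum_mul (X : Polynomial ℤ) n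
  have hne : (X : Polynomial ℤ) - 1 ≠ 0 := by
    intro hc
    have := congrArg (fun p => Polynomial.coeff p 1) hc
    simp [Polynomial.coeff_one] at this
  exact mul_right_cancel₀ hne (h.trans hg.symm)

private lemma geom_coeff (n k : ℕ) :
    (∑ i ∈ Finset.range n, (X : Polynomial ℤ) ^ i).coeff k = if k < n then 1 else 0 := by
  simp [Polynomial.finset_sum_coeff, Polynomial.coeff_X_pow]

private lemma musum (n : ℕ) : ∑ d ∈ n.divisors, μ d = if n = 1 then 1 else 0 := by
  rw [← coe_mul_zeta_apply, moebius_mul_coe_zeta, one_apply]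

private lemma evensum (n : ℕ) (h2 : 2 ∣ n) (h0 : n ≠ 0) :
    ∑ d ∈ n.divisors, (if 2 ∣ d then μ (d / 2) else 0) = if n = 2 then 1 else 0 := by
  rw [← Finset.sum_filter]
  have hb : ∑ d ∈ n.divisors.filter (2 ∣ ·), μ (d / 2) = ∑ e ∈ (n / 2).divisors, μ e := by
    refine Finset.sum_nbij' (fun d => d / 2) (fun e => 2 * e) ?_ ?_ ?_ ?_ ?_
    · intro d hd
      obtain ⟨hdn, h2d⟩ := Finset.mem_filter.mp hd
      obtain ⟨hdvd, -⟩ := Nat.mem_divisors.mp hdn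
      refine Nat.mem_divisors.mpr ⟨?_, by omega⟩
      obtain ⟨d', rfl⟩ := h2d
      obtain ⟨n', rfl⟩ := h2
      simpa [Nat.mul_div_cancel_left] using (mul_dvd_mul_iff_left (two_ne_zero)).mp hdvd
    · intro e he
      obtain ⟨hdvd, -⟩ := Nat.mem_divisors.mp he
      refine Finset.mem_filter.mpr ⟨Nat.mem_divisors.mpr ⟨?_, h0⟩, ⟨e, rfl⟩⟩
      obtain ⟨n', rfl⟩ := h2
      rw [Nat.mul_div_cancel_left _ (by norm_num)] at hdvd
      exact mul_dvd_mul_left 2 hdvd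
    · intro d hd
      obtain ⟨-, h2d⟩ := Finset.mem_filter.mp hd
      exact Nat.mul_div_cancel' h2d
    · intro e he
      simp
    · intro d hd
      rfl
  rw [hb, musum]
  have : n / 2 = 1 ↔ n = 2 := by omega
  simp [this]

private lemma key (n : ℕ) (hn : 2 ≤ n) :
    (cyclotomic n ℤ).coeff 1 = -μ n ∧
    2 * (cyclotomic n ℤ).coeff 2 =
      μ n ^ 2 - μ n - 2 * (if 2 ∣ n then μ (n / 2) else 0) := by
  induction n using Nat.strong_induction_on with
  | _ n IH =>
  have hpos : 0 < n := by omega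
  set D := n.divisors.erase 1 with hD
  have hnD : n ∈ D := Finset.mem_erase.mpr ⟨by omega, Nat.mem_divisors_self n hpos.ne'⟩
  have h0 : ∀ d ∈ D, (cyclotomic d ℤ).coeff 0 = 1 := by
    intro d hd
    obtain ⟨hd1, hdn⟩ := Finset.mem_erase.mp hd
    exact cyclotomic_coeff_zero ℤ (by have := Nat.pos_of_mem_divisors hdn; omega)
  obtain ⟨p0, p1, p2⟩ := prod_coeffs D (fun d => cyclotomic d ℤ) h0
  rw [Q_eq n hn] at p1 p2
  rw [geom_coeff] at p1 p2
  rw [if_pos (by omega)] at p1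
  -- divisor sums split
  have hmem : ∀ d ∈ D.erase n, d ∣ n ∧ 2 ≤ d ∧ d < n := by
    intro d hd
    obtain ⟨hdn, hd1, hdvd⟩ := Finset.mem_erase.mp hd |>.imp id (Finset.mem_erase.mp ·)
    have hdvd' := Nat.mem_divisors.mp hdvd |>.1
    have h1 := Nat.pos_of_mem_divisors hdvd
    exact ⟨hdvd', by omega, lt_of_le_of_ne (Nat.le_of_dvd hpos hdvd') hdn⟩
  -- IH on proper divisors
  have ih1 : ∀ d ∈ D.erase n, (cyclotomic d ℤ).coeff 1 = -μ d := fun d hd =>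
    (IH d (hmem d hd).2.2 (hmem d hd).2.1).1
  have ih2 : ∀ d ∈ D.erase n, 2 * (cyclotomic d ℤ).coeff 2 =
      μ d ^ 2 - μ d - 2 * (if 2 ∣ d then μ (d / 2) else 0) := fun d hd =>
    (IH d (hmem d hd).2.2 (hmem d hd).2.1).2
  -- moebius sum over D.erase n
  have hmu : ∑ d ∈ D.erase n, μ d = -1 - μ n := by
    have e1 : ∑ d ∈ n.divisors, μ d = μ 1 + ∑ d ∈ D, μ d :=
      (Finset.add_sum_erase _ _ (Nat.one_mem_divisors.mpr hpos.ne')).symm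
    have e2 : ∑ d ∈ D, μ d = μ n + ∑ d ∈ D.erase n, μ d :=
      (Finset.add_sum_erase _ _ hnD).symm
    rw [musum, if_neg (by omega)] at e1
    simp [moebius_apply_one] at e1
    omega
  -- coefficient 1 result
  have hsplit1 : ∑ d ∈ D, (cyclotomic d ℤ).coeff 1
      = (cyclotomic n ℤ).coeff 1 + ∑ d ∈ D.erase n, (cyclotomic d ℤ).coeff 1 :=
    (Finset.add_sum_erase _ _ hnD).symm
  have c1eq : (cyclotomic n ℤ).coeff 1 = -μ n := by
    rw [hsplit1, Finset.sum_congr rfl ih1, Finset.sum_neg_distrib, hmu] at p1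
    omega
  refine ⟨c1eq, ?_⟩
  -- coefficient 2
  have hc1all : ∀ d ∈ D, (cyclotomic d ℤ).coeff 1 = -μ d := by
    intro d hd
    rcases eq_or_ne d n with rfl | hdn
    · exact c1eq
    · exact ih1 d (Finset.mem_erase.mpr ⟨hdn, hd⟩)
  have hsq : ∑ d ∈ D, (cyclotomic d ℤ).coeff 1 ^ 2 = ∑ d ∈ D, μ d ^ 2 := by
    refine Finset.sum_congr rfl fun d hd => ?_
    rw [hc1all d hd]; ring
  set A : ℤ := ∑ d ∈ D.erase n, μ d ^ 2 with hA
  have hsq2 : ∑ d ∈ D, μ d ^ 2 = μ n ^ 2 + A := (Finset.add_sum_erase _ _ hnD).symm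
  set F : ℤ := ∑ d ∈ n.divisors, (if 2 ∣ d then μ (d / 2) else 0) with hF
  set en : ℤ := if 2 ∣ n then μ (n / 2) else 0 with hen
  have hFsum : ∑ d ∈ D.erase n, (if 2 ∣ d then μ (d / 2) else 0) = F - en := by
    have e1 : F = (if 2 ∣ 1 then μ (1 / 2) else 0)
        + ∑ d ∈ D, (if 2 ∣ d then μ (d / 2) else 0) :=
      (Finset.add_sum_erase _ _ (Nat.one_mem_divisors.mpr hpos.ne')).symm
    have e2 : ∑ d ∈ D, (if 2 ∣ d then μ (d / 2) else 0)
        = en + ∑ d ∈ D.erase n, (if 2 ∣ d then μ (d / 2) else 0) :=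
      (Finset.add_sum_erase _ _ hnD).symm
    rw [if_neg (by omega)] at e1
    omega
  have hFval : F = if n = 2 then 1 else 0 := by
    by_cases h2 : 2 ∣ n
    · rw [hF, evensum n h2 hpos.ne']
    · have hne2 : n ≠ 2 := by rintro rfl; exact h2 ⟨1, rfl⟩
      rw [if_neg hne2, hF]
      refine Finset.sum_eq_zero fun d hd => ?_
      rw [if_neg]
      intro hc
      exact h2 (hc.trans (Nat.mem_divisors.mp hd).1)
  -- sum of 2*c2 over proper part
  have hsum2 : 2 * ∑ d ∈ D.erase n, (cyclotomic d ℤ).coeff 2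
      = A - (-1 - μ n) - 2 * (F - en) := by
    rw [Finset.mul_sum, Finset.sum_congr rfl ih2]
    rw [Finset.sum_sub_distrib, Finset.sum_sub_distrib, ← hA, hmu, ← Finset.mul_sum, hFsum]
  have hsplit2 : ∑ d ∈ D, (cyclotomic d ℤ).coeff 2
      = (cyclotomic n ℤ).coeff 2 + ∑ d ∈ D.erase n, (cyclotomic d ℤ).coeff 2 :=
    (Finset.add_sum_erase _ _ hnD).symm
  have hqF : (2 * (if (2:ℕ) < n then (1:ℤ) else 0)) + 2 * F = 2 := by
    rcases eq_or_lt_of_le hn with h | h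
    · rw [if_neg (by omega), hFval, if_pos h.symm]; ring
    · rw [if_pos h, hFval, if_neg (by omega)]; ring
  have S1 : ∑ i ∈ D, (cyclotomic i ℤ).coeff 1 = 1 := p1.symm
  rw [hsplit2, hsq, hsq2, S1] at p2
  have hexp : 2 * ((cyclotomic n ℤ).coeff 2 + ∑ d ∈ D.erase n, (cyclotomic d ℤ).coeff 2)
      = 2 * (cyclotomic n ℤ).coeff 2 + 2 * ∑ d ∈ D.erase n, (cyclotomic d ℤ).coeff 2 := by ring
  rw [mul_add] at p2
  rw [hsum2] at p2
  linarith [p2, hqF]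

theorem cyclotomic_inv_coeff_of_moebius_neg_one (m : ℕ) (hm : 1 < m) (hsf : Squarefree m)
    (hμ : μ m = -1)
    (g : PowerSeries ℤ) (hg : (cyclotomic m ℤ : PowerSeries ℤ) * g = 1) :
    PowerSeries.coeff 0 g = 1 ∧ PowerSeries.coeff 1 g = -1 ∧
      PowerSeries.coeff 2 g = if Odd m then 0 else 1 := by
  obtain ⟨k1, k2⟩ := key m hm
  rw [hμ] at k1 k2
  have c1 : (cyclotomic m ℤ).coeff 1 = 1 := by rw [k1]; ring
  have c0 : (cyclotomic m ℤ).coeff 0 = 1 := cyclotomic_coeff_zero ℤ hm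
  have hμ2 : 2 ∣ m → μ (m / 2) = 1 := by
    intro h2
    have hm2 : 2 * (m / 2) = m := Nat.mul_div_cancel' h2
    have hsf' : Squarefree (2 * (m / 2)) := by rw [hm2]; exact hsf
    have hcop : Nat.Coprime 2 (m / 2) := (Nat.squarefree_mul_iff.mp hsf').1
    have := isMultiplicative_moebius.map_mul_of_coprime hcop
    rw [hm2, hμ, moebius_apply_prime Nat.prime_two] at this
    linarith
  have c2 : (cyclotomic m ℤ).coeff 2 = if Odd m then 1 else 0 := by
    by_cases h2 : 2 ∣ m
    · have hodd : ¬ Odd m := by simp [Nat.odd_iff, Nat.even_iff.mp (even_iff_two_dvd.mpr h2)]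
      rw [if_neg hodd]
      rw [if_pos h2, hμ2 h2] at k2
      linarith
    · have hodd : Odd m := Nat.odd_iff.mpr (by omega)
      rw [if_pos hodd]
      rw [if_neg h2] at k2
      linarith
  have e0 := congrArg (PowerSeries.coeff 0) hg
  have e1 := congrArg (PowerSeries.coeff 1) hg
  have e2 := congrArg (PowerSeries.coeff 2) hg
  rw [PowerSeries.coeff_mul, Finset.Nat.sum_antidiagonal_eq_sum_range_succ_mk] at e0 e1 e2
  simp [Finset.sum_range_succ, Polynomial.coeff_coe, c0, c1, c2, PowerSeries.coeff_one] at e0 e1 e2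
  rw [PowerSeries.coeff_zero_eq_constantCoeff]
  refine ⟨e0, ?_, ?_⟩ <;> split_ifs at e2 ⊢ <;> omega
end
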